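/- arXiv:1504.07811 — 2 statements merged into one kernel-verified Lean document; each statement's English description precedes it below -/
import Mathlib

section
/- Let G be a graph containing a path P with end vertices a and b, with P given an orientation from a to b. If there is a vertex w on P, distinct from a and b, such that a is adjacent to the successor w⁺ of w and b is adjacent to w, then G contains a cycle through all vertices of P. -/
open SimpleGraph

/-- The degree of `v` in the graph `T`. -/
noncomputable def tdeg {V : Type*} (T : SimpleGraph V) (v : V) : ℕ :=
  {w | T.Adj v w}.ncard

/-- The set of leaves (end vertices, degree-one vertices) of `T`. -/
def leafSet {V : Type*} (T : SimpleGraph V) : Set V := {v | tdeg T v = 1}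

/-- The set of branch vertices (degree at least three) of `T`. -/
def branchSet {V : Type*} (T : SimpleGraph V) : Set V := {v | 3 ≤ tdeg T v}

namespace SimpleGraph.Walk

variable {V : Type*} {G : SimpleGraph V}

/-- The first `n` darts of a walk. -/
def myTake {u v : V} : (p : G.Walk u v) → (n : ℕ) → G.Walk u (p.getVert n)
  | .nil, _ => .nil
  | .cons _ _, 0 => .nil
  | .cons h q, n + 1 => Walk.cons h (myTake q n)

lemma myTake_append_drop {u v : V} :
    ∀ (p : G.Walk u v) (n : ℕ), (p.myTake n).append (p.drop n) = p
  | .nil, n => by cases n <;> rfl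
  | .cons _ _, 0 => rfl
  | .cons h q, n + 1 =>
    congrArg (Walk.cons h) (myTake_append_drop q n)

lemma length_myTake {u v : V} :
    ∀ (p : G.Walk u v) (n : ℕ), (p.myTake n).length = min n p.length
  | .nil, n => by cases n <;> simp [myTake]
  | .cons _ _, 0 => by simp [myTake]; rfl
  | .cons h q, n + 1 => by
    show (Walk.cons h (q.myTake n)).length = _
    rw [Walk.length_cons, length_myTake q n, Walk.length_cons, Nat.succ_min_succ]

lemma getVert_drop' {u v : V} :
    ∀ (p : G.Walk u v) (n m : ℕ), (p.drop n).getVert m = p.getVert (n + m)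
  | .nil, n, m => by cases n <;> simp [drop, getVert_of_length_le]
  | .cons _ _, 0, m => by simp [drop]
  | .cons h q, n + 1, m => by
    show (q.drop n).getVert m = (Walk.cons h q).getVert (n + 1 + m)
    rw [show n + 1 + m = (n + m) + 1 from by omega, Walk.getVert_cons_succ,
      getVert_drop' q n m]

lemma length_drop' {u v : V} :
    ∀ (p : G.Walk u v) (n : ℕ), (p.drop n).length = p.length - n
  | .nil, n => by cases n <;> simp [drop]
  | .cons _ _, 0 => by simp [drop]
  | .cons h q, n + 1 => by
    show (q.drop n).length = (Walk.cons h q).length - (n + 1)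
    rw [length_drop' q n, Walk.length_cons]
    omega

lemma loop_isPath_length {x : V} (p : G.Walk x x) (hp : p.IsPath) : p.length = 0 := by
  cases p with
  | nil => rfl
  | cons h q =>
    have := hp.support_nodup
    simp only [support_cons, List.nodup_cons] at this
    exact absurd q.end_mem_support this.1

end SimpleGraph.Walk

/-- Rotation/crossing lemma: if `P` is an `a`-`b` path and there is an internal
vertex `w = P.getVert i` with `a` adjacent to its successor `w⁺` and `b`
adjacent to `w`, then `G` has a cycle through exactly the vertices of `P`. -/
theorem stmt_11 {V : Type*} (G : SimpleGraph V) (a b : V)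
    (P : G.Walk a b) (hP : P.IsPath) (i : ℕ) (hi1 : 1 ≤ i) (hi2 : i + 1 ≤ P.length)
    (ha : G.Adj a (P.getVert (i + 1))) (hb : G.Adj b (P.getVert i)) :
    ∃ (u : V) (C : G.Walk u u), C.IsCycle ∧
      ∀ v : V, v ∈ C.support ↔ v ∈ P.support := by
  classical
  set w := P.getVert i with hw
  set w' := P.getVert (i + 1) with hw'
  set P1 : G.Walk a w := P.myTake i with hP1
  set P2 : G.Walk w b := P.drop i with hP2
  have hilt : i < P.length := lt_of_lt_of_le (Nat.lt_succ_self i) hi2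
  have hP1len : P1.length = i := by
    rw [hP1, Walk.length_myTake]; omega
  have hP2len : P2.length = P.length - i := Walk.length_drop' P i
  have hP2nn : ¬ P2.Nil := by
    rw [Walk.not_nil_iff_lt_length]; omega
  have hgv1 : P2.getVert 1 = w' := by
    rw [hP2, Walk.getVert_drop']
  set P2' : G.Walk w' b := P2.tail.copy hgv1 rfl with hP2'
  have hsupP2 : P2.support = w :: P2'.support := by
    rw [hP2', Walk.support_copy, Walk.support_tail_of_not_nil _ hP2nn]
    exact (Walk.cons_support_tail hP2nn).symm ▸ rfl
  have hsplit : P.support = P1.support ++ P2'.support := by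
    conv_lhs => rw [← Walk.myTake_append_drop P i]
    rw [Walk.support_append, ← hP1, ← hP2, hsupP2]
    rfl
  have hnd : (P1.support ++ P2'.support).Nodup := hsplit ▸ hP.support_nodup
  have hndP1 : P1.support.Nodup := (List.nodup_append.mp hnd).1
  have hndP2' : P2'.support.Nodup := (List.nodup_append.mp hnd).2.1
  have hdisj : ∀ x, x ∈ P1.support → x ∈ P2'.support → False := by
    intro x h1 h2
    exact (List.nodup_append'.mp hnd).2.2 h1 h2
  -- the cycle
  have hbw : G.Adj b w := hb
  have haw' : G.Adj a w' := ha
  set R : G.Walk b a := Walk.cons hbw P1.reverse with hR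
  set Q : G.Walk w' a := P2'.append R with hQ
  have hQsup : Q.support = P2'.support ++ P1.support.reverse := by
    rw [hQ, Walk.support_append, hR, Walk.support_cons, List.tail_cons,
      Walk.support_reverse]
  have hQnd : Q.support.Nodup := by
    rw [hQsup]
    refine List.Perm.nodup (List.Perm.trans List.perm_append_comm
      (List.Perm.append_left _ (List.reverse_perm P1.support).symm)) hnd
  have hQpath : Q.IsPath := Walk.IsPath.mk' hQnd
  have haP1 : a ∈ P1.support := Walk.start_mem_support P1
  have hw'P2' : w' ∈ P2'.support := Walk.start_mem_support P2'
  have hbP2' : b ∈ P2'.support := Walk.end_mem_support P2'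
  have hane : a ∉ P2'.support := fun h => hdisj a haP1 h
  have hw'ne : w' ∉ P1.support := fun h => hdisj w' h hw'P2'
  have haneb : a ≠ b := fun h => hane (h ▸ hbP2')
  have hanew : a ≠ w := by
    intro h
    have : (P1.copy rfl h.symm).IsPath :=
      Walk.IsPath.mk' (by rw [Walk.support_copy]; exact hndP1)
    have h0 := Walk.loop_isPath_length _ this
    rw [Walk.length_copy, hP1len] at h0
    omega
  have hedge : s(a, w') ∉ Q.edges := by
    rw [hQ, Walk.edges_append, hR, Walk.edges_cons]
    simp only [List.mem_append, List.mem_cons, not_or]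
    refine ⟨fun h => hane (P2'.fst_mem_support_of_mem_edges h), fun h => ?_,
      fun h => ?_⟩
    · rcases Sym2.eq_iff.mp h with ⟨h1, h2⟩ | ⟨h1, h2⟩
      · exact haneb (by exact_mod_cast h1)
      · exact hanew (by exact_mod_cast h1)
    · rw [Walk.edges_reverse, List.mem_reverse] at h
      exact hw'ne (P1.snd_mem_support_of_mem_edges h)
  refine ⟨a, Walk.cons haw' Q, ?_, ?_⟩
  · rw [Walk.cons_isCycle_iff]
    exact ⟨hQpath, hedge⟩
  · intro v
    rw [Walk.support_cons, hsplit, hQsup]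
    simp only [List.mem_cons, List.mem_append, List.mem_reverse]
    constructor
    · rintro (rfl | h | h)
      · exact Or.inl haP1
      · exact Or.inr h
      · exact Or.inl h
    · rintro (h | h)
      · exact Or.inr (Or.inr h)
      · exact Or.inr (Or.inl h)
end

section
/- If a connected graph G on n vertices satisfies σ₂ ≥ n − 2, then G has a spanning tree with at most one branch vertex. -/
open SimpleGraph

lemma walk_closed {V : Type*} {H : SimpleGraph V} {S : Set V}
    (hS : ∀ a ∈ S, ∀ b, H.Adj a b → b ∈ S) :
    ∀ {u v : V}, H.Walk u v → u ∈ S → v ∈ S := by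
  intro u v w
  induction w with
  | nil => exact id
  | cons h p ih => intro hu; exact ih (hS _ hu _ h)

lemma spider {V : Type*} [Fintype V] (G : SimpleGraph V)
    (L : List V) (hne : L ≠ []) (hch : L.Chain' G.Adj) (hnd : L.Nodup)
    (x : V) (hx : x ∉ L) (j : ℕ) (hj : j < L.length)
    (hadjx : G.Adj x (L[j]'hj)) (hcov : ∀ v : V, v ∈ L ∨ v = x) :
    ∃ T : SimpleGraph V, T ≤ G ∧ T.IsTree ∧ (branchSet T).ncard ≤ 1 := by
  classical
  set p := L.length with hp
  have h0 : 0 < p := List.length_pos_iff.mpr hne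
  have hGadj : ∀ i : ℕ, ∀ h : i + 1 < p, G.Adj (L[i]'(by omega)) (L[i+1]'h) :=
    fun i h => List.isChain_iff_getElem.mp hch i (by omega)
  set E : Set (Sym2 V) :=
    {e | (∃ i : ℕ, ∃ h : i + 1 < p, e = s(L[i]'(by omega), L[i+1]'h)) ∨ e = s(x, L[j]'hj)}
    with hE
  set T : SimpleGraph V := fromEdgeSet E with hTdef
  have hinj : ∀ {i k : ℕ} {hi : i < p} {hk : k < p}, L[i]'hi = L[k]'hk → i = k :=
    fun {i k hi hk} h => (hnd.getElem_inj_iff).mp h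
  -- characterization of adjacency in T
  have hT : ∀ u w : V, T.Adj u w →
      (∃ i : ℕ, ∃ h : i + 1 < p,
        ((L[i]'(by omega)) = u ∧ (L[i+1]'h) = w) ∨ ((L[i]'(by omega)) = w ∧ (L[i+1]'h) = u))
      ∨ (u = x ∧ w = L[j]'hj) ∨ (w = x ∧ u = L[j]'hj) := by
    intro u w h
    rw [hTdef, fromEdgeSet_adj] at h
    obtain ⟨hmem, hne'⟩ := h
    rcases hmem with ⟨i, hi, he⟩ | he
    · rcases Sym2.eq_iff.mp he with ⟨h1, h2⟩ | ⟨h1, h2⟩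
      · exact Or.inl ⟨i, hi, Or.inl ⟨h1.symm, h2.symm⟩⟩
      · exact Or.inl ⟨i, hi, Or.inr ⟨h2.symm, h1.symm⟩⟩
    · rcases Sym2.eq_iff.mp he with ⟨h1, h2⟩ | ⟨h1, h2⟩
      · exact Or.inr (Or.inl ⟨h1, h2⟩)
      · exact Or.inr (Or.inr ⟨h2, h1⟩)
  have hTadj1 : ∀ i : ℕ, ∀ h : i + 1 < p, T.Adj (L[i]'(by omega)) (L[i+1]'h) := by
    intro i h
    rw [hTdef, fromEdgeSet_adj]
    refine ⟨Or.inl ⟨i, h, rfl⟩, fun he => ?_⟩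
    exact absurd (hinj he) (by omega)
  have hxj : x ≠ L[j]'hj := fun h => hx (h ▸ List.getElem_mem hj)
  have hTadj2 : T.Adj x (L[j]'hj) := by
    rw [hTdef, fromEdgeSet_adj]
    exact ⟨Or.inr rfl, hxj⟩
  have hle : T ≤ G := by
    intro u w h
    rcases hT u w h with ⟨i, hi, ⟨h1, h2⟩ | ⟨h1, h2⟩⟩ | ⟨h1, h2⟩ | ⟨h1, h2⟩
    · exact h1 ▸ h2 ▸ hGadj i hi
    · exact h1 ▸ h2 ▸ (hGadj i hi).symm
    · exact h1 ▸ h2 ▸ hadjx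
    · exact h1 ▸ h2 ▸ hadjx.symm
  -- connectivity
  have hreach : ∀ k : ℕ, ∀ hk : k < p, T.Reachable (L[0]'h0) (L[k]'hk) := by
    intro k
    induction k with
    | zero => exact fun _ => Reachable.refl _
    | succ m ih => exact fun hk => (ih (by omega)).trans (hTadj1 m hk).reachable
  have hreachall : ∀ v : V, T.Reachable (L[0]'h0) v := by
    intro v
    rcases hcov v with hv | rfl
    · obtain ⟨k, hk, rfl⟩ := List.mem_iff_getElem.mp hv
      exact hreach k hk
    · exact (hreach j hj).trans hTadj2.reachable.symm
  have hconn : T.Connected := by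
    rw [connected_iff]
    exact ⟨fun u v => (hreachall u).symm.trans (hreachall v), ⟨x⟩⟩
  -- acyclicity via bridges
  have hacyc : T.IsAcyclic := by
    rw [isAcyclic_iff_forall_edge_isBridge]
    intro e he
    rw [hTdef, edgeSet_fromEdgeSet] at he
    rcases he.1 with ⟨i, hi, rfl⟩ | rfl
    · rw [isBridge_iff]
      refine fun hr => ?_
      set S : Set V := {v | (∃ k : ℕ, ∃ hk : k < p, k ≤ i ∧ v = L[k]'hk) ∨ (v = x ∧ j ≤ i)}
        with hS
      have hclosed : ∀ a ∈ S, ∀ b, (T \ fromEdgeSet {s(L[i]'(by omega), L[i+1]'hi)}).Adj a b → b ∈ S := by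
        intro a ha b hab
        rw [sdiff_adj] at hab
        obtain ⟨hab, hnot⟩ := hab
        have hne' : s(a, b) ≠ s(L[i]'(by omega), L[i+1]'hi) := by
          intro h
          exact hnot (by rw [fromEdgeSet_adj]; exact ⟨by simp [h], hab.ne⟩)
        rcases hT a b hab with ⟨i', hi', ⟨h1, h2⟩ | ⟨h1, h2⟩⟩ | ⟨h1, h2⟩ | ⟨h1, h2⟩
        · -- a = L[i'], b = L[i'+1]
          rcases ha with ⟨k, hk, hki, rfl⟩ | ⟨rfl, hji⟩
          · have : i' = k := hinj h1
            subst this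
            have hik : i' < i := by
              rcases Nat.lt_or_ge i' i with h | h
              · exact h
              · exfalso
                have : i' = i := by omega
                subst this
                exact hne' (by rw [h1, h2])
            exact Or.inl ⟨i' + 1, hi', by omega, h2.symm⟩
          · exact absurd (h1 ▸ List.getElem_mem (by omega)) hx
        · -- b = L[i'], a = L[i'+1]
          rcases ha with ⟨k, hk, hki, rfl⟩ | ⟨rfl, hji⟩
          · have : i' + 1 = k := hinj h2
            exact Or.inl ⟨i', by omega, by omega, h1.symm⟩
          · exact absurd (h2 ▸ List.getElem_mem hi') hx
        · -- a = x, b = L[j]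
          subst h1
          rcases ha with ⟨k, hk, hki, hkx⟩ | ⟨_, hji⟩
          · exact absurd (hkx ▸ List.getElem_mem hk) hx
          · exact Or.inl ⟨j, hj, hji, h2⟩
        · -- b = x, a = L[j]
          rcases ha with ⟨k, hk, hki, rfl⟩ | ⟨hax, hji⟩
          · have : k = j := hinj h2
            exact Or.inr ⟨h1, by omega⟩
          · exact absurd (hax ▸ h2 ▸ List.getElem_mem hj) hx
      have hmem : (L[i+1]'hi) ∈ S := by
        obtain ⟨w⟩ := hr
        exact walk_closed hclosed w (Or.inl ⟨i, by omega, le_refl i, rfl⟩)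
      rcases hmem with ⟨k, hk, hki, hkeq⟩ | ⟨hxe, _⟩
      · have : i + 1 = k := hinj hkeq
        omega
      · exact hx (hxe ▸ List.getElem_mem hi)
    · rw [isBridge_iff]
      refine fun hr => ?_
      have hclosed : ∀ a ∈ ({x} : Set V), ∀ b,
          (T \ fromEdgeSet {s(x, L[j]'hj)}).Adj a b → b ∈ ({x} : Set V) := by
        intro a ha b hab
        rw [sdiff_adj] at hab
        obtain ⟨hab, hnot⟩ := hab
        rcases ha with rfl
        have hne' : s(a, b) ≠ s(a, L[j]'hj) := by
          intro h
          exact hnot (by rw [fromEdgeSet_adj]; exact ⟨by simp [h], hab.ne⟩)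
        rcases hT a b hab with ⟨i', hi', ⟨h1, h2⟩ | ⟨h1, h2⟩⟩ | ⟨h1, h2⟩ | ⟨h1, h2⟩
        · exact absurd (h1 ▸ List.getElem_mem (by omega)) hx
        · exact absurd (h2 ▸ List.getElem_mem hi') hx
        · exact absurd (h2 ▸ rfl) hne'
        · exact absurd (h2 ▸ List.getElem_mem hj) hx
      obtain ⟨w⟩ := hr
      have := walk_closed hclosed w rfl
      exact hxj this.symm
  -- branch set
  have hbranch : branchSet T ⊆ {L[j]'hj} := by
    intro u hu
    by_contra huj
    have huj' : u ≠ L[j]'hj := huj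
    have h3 : 3 ≤ tdeg T u := hu
    have h2 : tdeg T u ≤ 2 := by
      rcases hcov u with humem | hux
      · obtain ⟨k, hk, rfl⟩ := List.mem_iff_getElem.mp humem
        have hkj : k ≠ j := fun h => huj' (by subst h; rfl)
        have hsub : {w | T.Adj (L[k]'hk) w} ⊆
            {L.getD (k-1) (L[k]'hk), L.getD (k+1) (L[k]'hk)} := by
          intro w hw
          rcases hT _ w hw with ⟨i', hi', ⟨h1, h2⟩ | ⟨h1, h2⟩⟩ | ⟨h1, h2⟩ | ⟨h1, h2⟩
          · have : i' = k := hinj h1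
            subst this
            right
            rw [List.getD_eq_getElem L _ hi']
            exact h2.symm
          · have : i' + 1 = k := hinj h2
            left
            rw [show k - 1 = i' by omega, List.getD_eq_getElem L _ (by omega : i' < p)]
            exact h1.symm
          · exact absurd (h1 ▸ List.getElem_mem hk) hx
          · exact absurd (hinj h2) hkj
        calc tdeg T (L[k]'hk) ≤ ({L.getD (k-1) (L[k]'hk), L.getD (k+1) (L[k]'hk)} : Set V).ncard :=
              Set.ncard_le_ncard hsub (Set.toFinite _)
          _ ≤ 2 := by
              refine le_trans (Set.ncard_insert_le _ _) ?_
              simp [Set.ncard_singleton]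
      · subst hux
        have hsub : {w | T.Adj u w} ⊆ {L[j]'hj} := by
          intro w hw
          rcases hT _ w hw with ⟨i', hi', ⟨h1, h2⟩ | ⟨h1, h2⟩⟩ | ⟨h1, h2⟩ | ⟨h1, h2⟩
          · exact absurd (h1 ▸ List.getElem_mem (by omega)) hx
          · exact absurd (h2 ▸ List.getElem_mem hi') hx
          · exact h2
          · exact absurd (h2 ▸ List.getElem_mem hj) hx
        calc tdeg T u ≤ ({L[j]'hj} : Set V).ncard := Set.ncard_le_ncard hsub (Set.toFinite _)
          _ ≤ 2 := by simp [Set.ncard_singleton]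
    omega
  refine ⟨T, hle, ⟨hconn, hacyc⟩, ?_⟩
  calc (branchSet T).ncard ≤ ({L[j]'hj} : Set V).ncard :=
        Set.ncard_le_ncard hbranch (Set.toFinite _)
    _ = 1 := Set.ncard_singleton _

lemma cross_of_walk {V : Type*} {G : SimpleGraph V} {S : Set V} :
    ∀ {u v : V}, G.Walk u v → u ∈ S → v ∉ S → ∃ a ∈ S, ∃ b, b ∉ S ∧ G.Adj a b := by
  intro u v w
  induction w with
  | nil => intro hu hv; exact absurd hu hv
  | @cons u x v h p ih =>
    intro hu hv
    by_cases hxS : x ∈ S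
    · exact ih hxS hv
    · exact ⟨u, hu, x, hxS, h⟩

lemma flip_adj {V : Type*} (G : SimpleGraph V) : flip G.Adj = G.Adj := by
  funext u v
  exact propext (G.adj_comm v u)

/-- A connected graph with σ₂ ≥ n - 2 has a spanning tree with at most one
branch vertex. -/
theorem stmt_13 {V : Type*} [Fintype V] (G : SimpleGraph V) (hG : G.Connected)
    (hσ : ∀ u v : V, u ≠ v → ¬ G.Adj u v →
      (Fintype.card V : ℤ) - 2 ≤ tdeg G u + tdeg G v) :
    ∃ T : SimpleGraph V, T ≤ G ∧ T.IsTree ∧ (branchSet T).ncard ≤ 1 := by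
  classical
  obtain ⟨v₀⟩ := hG.nonempty
  set n := Fintype.card V with hn
  set PP : ℕ → Prop := fun k => ∃ L : List V, L.Chain' G.Adj ∧ L.Nodup ∧ L.length = k with hPPdef
  have h1 : PP 1 := ⟨[v₀], List.isChain_singleton _, List.nodup_singleton _, rfl⟩
  have hbd : ∀ k, PP k → k ≤ n := by
    rintro k ⟨L, -, hnd, hl⟩
    exact hl ▸ hnd.length_le_card
  have h1n : 1 ≤ n := hbd 1 h1
  set p := Nat.findGreatest PP n with hpdef
  have hPP : PP p := Nat.findGreatest_spec h1n h1
  have hmax : ∀ k, PP k → k ≤ p := fun k hk => Nat.le_findGreatest (hbd k hk) hk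
  obtain ⟨L, hch, hnd, hlen⟩ := hPP
  have hp1 : 1 ≤ p := hmax 1 h1
  have hLne : L ≠ [] := by
    intro h
    rw [h] at hlen
    simp at hlen; omega
  have h0 : 0 < L.length := List.length_pos_iff.mpr hLne
  -- extension lemma: for maximal paths, heads have all neighbors inside
  have hext : ∀ M : List V, M.Chain' G.Adj → M.Nodup → M.length = p →
      ∀ h0 : 0 < M.length, ∀ w, G.Adj (M[0]'h0) w → w ∈ M := by
    intro M hch' hnd' hlen' h0' w hadj
    by_contra hw
    have : PP (p + 1) := by
      refine ⟨w :: M, ?_, List.nodup_cons.mpr ⟨hw, hnd'⟩, by simp [hlen']⟩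
      unfold List.Chain'; rw [List.isChain_cons]
      refine ⟨fun y hy => ?_, hch'⟩
      have hy' : M[0]'h0' = y := by
        rw [List.head?_eq_head (List.ne_nil_of_length_pos h0'), List.head_eq_getElem] at hy
        simpa using hy
      rw [← hy']
      exact hadj.symm
    have := hmax _ this
    omega
  -- the reverse list
  have hchR : L.reverse.Chain' G.Adj := by
    unfold List.Chain'; rw [List.isChain_reverse]; exact List.IsChain.imp (fun a b h => h.symm) hch
  have hR0 : L.reverse[0]'(by simpa using h0) = L[L.length - 1]'(by omega) := by
    rw [List.getElem_reverse]; congr 1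
  -- cycle lemma
  have hcyc : p < n → ∀ C : List V, C ≠ [] → C.Chain' G.Adj → C.Nodup → C.length = p →
      (∀ a ∈ C.getLast?, ∀ b ∈ C.head?, G.Adj a b) → False := by
    intro hpn C hCne hchC hndC hlenC hclose
    -- a vertex outside C
    have hout : ∃ z, z ∉ C := by
      by_contra h
      push_neg at h
      have : (Finset.univ : Finset V) ⊆ C.toFinset := fun z _ => List.mem_toFinset.mpr (h z)
      have := Finset.card_le_card this
      rw [List.toFinset_card_of_nodup hndC] at this
      simp only [Finset.card_univ] at this
      omega
    obtain ⟨z, hz⟩ := hout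
    have hC0 : 0 < C.length := List.length_pos_iff.mpr hCne
    obtain ⟨w⟩ := hG.preconnected (C.head hCne) z
    obtain ⟨a, haC, b, hbC, hab⟩ :=
      cross_of_walk (S := {v | v ∈ C}) w (List.head_mem hCne) hz
    obtain ⟨C₁, C₂, hCsplit⟩ := List.append_of_mem haC
    set R : List V := a :: (C₂ ++ C₁) with hRdef
    have hperm : C.Perm R := by
      rw [hCsplit, hRdef, ← List.cons_append]
      exact List.perm_append_comm
    have hRch : R.Chain' G.Adj := by
      rw [hRdef, show a :: (C₂ ++ C₁) = (a :: C₂) ++ C₁ by simp]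
      unfold List.Chain'; rw [List.isChain_append]
      refine ⟨List.IsChain.suffix hchC ⟨C₁, hCsplit.symm⟩, List.IsChain.prefix hchC ⟨a :: C₂, hCsplit.symm⟩, ?_⟩
      intro u hu y hy
      have hC₁ne : C₁ ≠ [] := by
        intro h; rw [h] at hy; simp at hy
      have hCLast : C.getLast? = (a :: C₂).getLast? := by
        rw [hCsplit, List.getLast?_append]
        rw [List.getLast?_eq_getLast (l := a :: C₂) (by simp)]
        rfl
      have hCHead : C.head? = C₁.head? := by
        rw [hCsplit, List.head?_append, List.head?_eq_head hC₁ne]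
        rfl
      exact hclose u (hCLast ▸ hu) y (hCHead ▸ hy)
    have : PP (p + 1) := by
      refine ⟨b :: R, ?_, ?_, ?_⟩
      · unfold List.Chain'; rw [List.isChain_cons]
        refine ⟨fun y hy => ?_, hRch⟩
        rw [hRdef] at hy
        simp only [List.head?_cons, Option.mem_some_iff] at hy
        rw [← hy]
        exact hab.symm
      · rw [List.nodup_cons]
        exact ⟨fun h => hbC (hperm.mem_iff.mpr h), (hperm.nodup_iff).mp hndC⟩
      · simp [← hperm.length_eq, hlenC]
    have := hmax _ this
    omega
  by_cases hpn : p = n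
  · -- Hamiltonian path case
    have hcovL : ∀ v : V, v ∈ L := by
      intro v
      by_contra hv
      have : (Finset.univ : Finset V) ≠ L.toFinset := by
        intro h
        exact hv (List.mem_toFinset.mp (h ▸ Finset.mem_univ v))
      have hsub : L.toFinset ⊆ Finset.univ := fun z _ => Finset.mem_univ z
      have hlt : L.toFinset.card < n := by
        rcases lt_or_eq_of_le (Finset.card_le_card hsub) with h | h
        · simpa using h
        · exact absurd (Finset.eq_of_subset_of_card_le hsub (le_of_eq h.symm)).symm this
      rw [List.toFinset_card_of_nodup hnd, hlen] at hlt
      omega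
    by_cases hp2 : 2 ≤ p
    · -- use spider with x = head, list = tail, j = 0
      have htne : L.tail ≠ [] := by
        intro h
        have := congrArg List.length h
        simp [hlen] at this; omega
      have ht0 : 0 < L.tail.length := List.length_pos_iff.mpr htne
      have hLht : L = L.head hLne :: L.tail := (List.cons_head_tail hLne).symm
      have hxt : L.head hLne ∉ L.tail := by
        have := hnd
        rw [hLht, List.nodup_cons] at this
        exact this.1
      have hadj01 : G.Adj (L.head hLne) (L.tail[0]'ht0) := by
        have := List.isChain_iff_getElem.mp hch 0 (by omega)
        simpa [List.head_eq_getElem, List.getElem_tail] using this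
      refine spider G L.tail htne (List.IsChain.tail hch) hnd.tail (L.head hLne) hxt 0 ht0 hadj01 ?_
      intro v
      have := hcovL v
      rw [hLht] at this
      rcases List.mem_cons.mp this with h | h
      · exact Or.inr h
      · exact Or.inl h
    · -- p = 1, so n = 1
      have hn1 : n = 1 := by omega
      refine ⟨⊥, bot_le, ⟨?_, isAcyclic_bot⟩, ?_⟩
      · rw [connected_iff]
        have : Subsingleton V := Fintype.card_le_one_iff_subsingleton.mp (le_of_eq hn1)
        exact ⟨fun u v => by rw [Subsingleton.elim u v], ⟨v₀⟩⟩
      · have : branchSet (⊥ : SimpleGraph V) = ∅ := by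
          ext v
          simp only [branchSet, Set.mem_setOf_eq, Set.mem_empty_iff_false, iff_false, not_le]
          have : tdeg (⊥ : SimpleGraph V) v = 0 := by
            simp [tdeg]
          omega
        simp [this]
  · have hpltn : p < n := lt_of_le_of_ne (hbd p ⟨L, hch, hnd, hlen⟩) hpn
    -- p ≥ 2
    have hp2 : 2 ≤ p := by
      by_contra h
      have hp1' : p = 1 := by omega
      have hz : ∃ z, z ∉ L := by
        by_contra hzz
        push_neg at hzz
        have : (Finset.univ : Finset V) ⊆ L.toFinset := fun z _ => List.mem_toFinset.mpr (hzz z)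
        have := Finset.card_le_card this
        rw [List.toFinset_card_of_nodup hnd] at this
        simp only [Finset.card_univ] at this
        omega
      obtain ⟨z, hz⟩ := hz
      obtain ⟨w⟩ := hG.preconnected (L[0]'h0) z
      obtain ⟨a, haL, b, hbL, hab⟩ := cross_of_walk (S := {v | v ∈ L}) w (List.getElem_mem h0) hz
      have ha0 : a = L[0]'h0 := by
        obtain ⟨k, hk, rfl⟩ := List.mem_iff_getElem.mp haL
        have : k = 0 := by omega
        subst this; rfl
      exact hbL (hext L hch hnd hlen h0 b (ha0 ▸ hab))
    have hplen : L.length = p := hlen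
    have e0 : 0 < L.length := h0
    have e1 : L.length - 1 < L.length := by omega
    set va := L[0]'e0 with hva
    set vb := L[L.length - 1]'e1 with hvb
    have hab : va ≠ vb := by
      intro h
      have := (hnd.getElem_inj_iff).mp h
      omega
    -- last vertex neighbors are in L
    have hnbrB : ∀ w, G.Adj vb w → w ∈ L := by
      intro w hw
      have := hext L.reverse hchR (List.nodup_reverse.mpr hnd) (by simp [hlen]) (by simpa using h0) w
        (by rw [hR0]; exact hw)
      simpa using this
    have hnbrA : ∀ w, G.Adj va w → w ∈ L := hext L hch hnd hlen h0
    -- va and vb not adjacent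
    have hnadj : ¬ G.Adj va vb := by
      intro h
      refine hcyc hpltn L hLne hch hnd hlen ?_
      intro a ha b hb
      rw [List.getLast?_eq_getLast (l := L) hLne, List.getLast_eq_getElem] at ha
      rw [List.head?_eq_head hLne, List.head_eq_getElem] at hb
      rw [← Option.some_inj.mp ha, ← Option.some_inj.mp hb]
      exact h.symm
    -- degree sets
    set A : Finset ℕ := (Finset.range (p-1)).filter
      (fun i => G.Adj va (L.getD (i+1) va)) with hA
    set B : Finset ℕ := (Finset.range (p-1)).filter
      (fun i => G.Adj vb (L.getD i va)) with hB
    have hdegA : tdeg G va = A.card := by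
      have himg : {w | G.Adj va w} = ↑(A.image (fun i => L.getD (i+1) va)) := by
        ext w
        simp only [Set.mem_setOf_eq, Finset.coe_image, Set.mem_image, Finset.mem_coe,
          Finset.mem_filter, Finset.mem_range, hA]
        constructor
        · intro hw
          obtain ⟨k, hk, rfl⟩ := List.mem_iff_getElem.mp (hnbrA w hw)
          have hk0 : k ≠ 0 := by
            intro h; subst h; exact hw.ne rfl
          have hEq : L.getD (k - 1 + 1) va = L[k]'hk := by
            rw [List.getD_eq_getElem L _ (show k - 1 + 1 < L.length by omega)]
            congr 1
            omega
          exact ⟨k - 1, ⟨by omega, hEq ▸ hw⟩, hEq⟩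
        · rintro ⟨i, ⟨hi, hadj⟩, rfl⟩
          exact hadj
      unfold tdeg
      rw [himg, Set.ncard_coe_finset]
      apply Finset.card_image_of_injOn
      intro i hi k hk hik
      simp only [hA, Finset.mem_coe, Finset.mem_filter, Finset.mem_range] at hi hk
      have hik' : L.getD (i + 1) va = L.getD (k + 1) va := hik
      rw [List.getD_eq_getElem L _ (show i + 1 < L.length by omega),
        List.getD_eq_getElem L _ (show k + 1 < L.length by omega)] at hik'
      have hik := hik'
      have := (hnd.getElem_inj_iff).mp hik
      omega
    have hdegB : tdeg G vb = B.card := by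
      have himg : {w | G.Adj vb w} = ↑(B.image (fun i => L.getD i va)) := by
        ext w
        simp only [Set.mem_setOf_eq, Finset.coe_image, Set.mem_image, Finset.mem_coe,
          Finset.mem_filter, Finset.mem_range, hB]
        constructor
        · intro hw
          obtain ⟨k, hk, rfl⟩ := List.mem_iff_getElem.mp (hnbrB w hw)
          have hk0 : k ≠ L.length - 1 := by
            intro h
            exact hw.ne (by rw [hvb]; congr 1; omega)
          refine ⟨k, ⟨by omega, ?_⟩, ?_⟩
          · rwa [List.getD_eq_getElem L _ hk]
          · rw [List.getD_eq_getElem L _ hk]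
        · rintro ⟨i, ⟨hi, hadj⟩, rfl⟩
          exact hadj
      unfold tdeg
      rw [himg, Set.ncard_coe_finset]
      apply Finset.card_image_of_injOn
      intro i hi k hk hik
      simp only [hB, Finset.mem_coe, Finset.mem_filter, Finset.mem_range] at hi hk
      have hik' : L.getD i va = L.getD k va := hik
      rw [List.getD_eq_getElem L _ (show i < L.length by omega),
        List.getD_eq_getElem L _ (show k < L.length by omega)] at hik'
      have hik := hik'
      exact (hnd.getElem_inj_iff).mp hik
    -- disjointness via crossing
    have hdisj : Disjoint A B := by
      rw [Finset.disjoint_left]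
      intro i hiA hiB
      simp only [hA, Finset.mem_filter, Finset.mem_range] at hiA
      simp only [hB, Finset.mem_filter, Finset.mem_range] at hiB
      obtain ⟨hilt, hadjA⟩ := hiA
      obtain ⟨-, hadjB⟩ := hiB
      have hi1 : i + 1 < L.length := by omega
      have hiL : i < L.length := by omega
      rw [List.getD_eq_getElem L _ hi1] at hadjA
      rw [List.getD_eq_getElem L _ hiL] at hadjB
      -- build the crossing cycle
      set C : List V := L.take (i+1) ++ (L.drop (i+1)).reverse with hC
      have hdropne : L.drop (i+1) ≠ [] := by
        intro h
        have h' : L.length - (i+1) = 0 := by rw [← List.length_drop, h]; rfl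
        omega
      have htakene : L.take (i+1) ≠ [] := by
        intro h
        have h' : min (i+1) L.length = 0 := by rw [← List.length_take, h]; rfl
        omega
      have hCperm : C.Perm L := by
        rw [hC]
        have h1 : (L.take (i+1) ++ (L.drop (i+1)).reverse).Perm (L.take (i+1) ++ L.drop (i+1)) :=
          List.Perm.append_left _ (List.reverse_perm _)
        rw [List.take_append_drop] at h1
        exact h1
      have htake_last : (L.take (i+1)).getLast? = some (L[i]'hiL) := by
        rw [List.take_succ, List.getElem?_eq_getElem hiL, Option.toList_some,
          List.getLast?_concat]
      have hdrop_head : (L.drop (i+1)).head? = some (L[i+1]'hi1) := by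
        rw [List.head?_drop, List.getElem?_eq_getElem hi1]
      have hdrop_last : (L.drop (i+1)).getLast? = some vb := by
        have h1 : L.getLast? = some vb := by
          rw [List.getLast?_eq_getLast (l := L) hLne, List.getLast_eq_getElem]
        have h2 : L.getLast? = (L.drop (i+1)).getLast?.or (L.take (i+1)).getLast? := by
          conv_lhs => rw [← List.take_append_drop (i+1) L]
          rw [List.getLast?_append]
        rw [h2, List.getLast?_eq_getLast hdropne] at h1
        rw [List.getLast?_eq_getLast hdropne]
        simpa using h1
      have htake_head : (L.take (i+1)).head? = some va := by
        have h2 : L.head? = (L.take (i+1)).head?.or (L.drop (i+1)).head? := by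
          conv_lhs => rw [← List.take_append_drop (i+1) L]
          rw [List.head?_append]
        rw [List.head?_eq_head hLne, List.head_eq_getElem] at h2
        rw [List.head?_eq_head htakene] at h2 ⊢
        simpa [hva] using h2.symm
      have hCch : C.Chain' G.Adj := by
        unfold List.Chain'; rw [hC, List.isChain_append]
        refine ⟨List.IsChain.prefix hch (List.take_prefix _ _), ?_, ?_⟩
        · rw [List.isChain_reverse]
          exact List.IsChain.imp (fun a b h => h.symm) (List.IsChain.suffix hch (List.drop_suffix _ _))
        · intro u hu y hy
          rw [htake_last] at hu
          rw [List.head?_reverse, hdrop_last] at hy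
          rw [← Option.some_inj.mp hu, ← Option.some_inj.mp hy]
          exact hadjB.symm
      have hCne : C ≠ [] := by
        intro h
        rw [hC] at h
        exact htakene (List.append_eq_nil_iff.mp h).1
      refine hcyc hpltn C hCne hCch (hCperm.nodup_iff.mpr hnd) (by rw [hCperm.length_eq, hlen]) ?_
      intro u hu y hy
      have hClast : C.getLast? = some (L[i+1]'hi1) := by
        rw [hC, List.getLast?_append, List.getLast?_reverse, hdrop_head]
        rfl
      have hChead : C.head? = some va := by
        rw [hC, List.head?_append, htake_head]
        rfl
      rw [hClast] at hu
      rw [hChead] at hy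
      rw [← Option.some_inj.mp hu, ← Option.some_inj.mp hy]
      exact hadjA.symm
    -- degree sum bound
    have hsum : A.card + B.card ≤ p - 1 := by
      rw [← Finset.card_union_of_disjoint hdisj]
      calc (A ∪ B).card ≤ (Finset.range (p-1)).card := by
            apply Finset.card_le_card
            intro i hi
            rcases Finset.mem_union.mp hi with h | h
            · exact (Finset.mem_filter.mp h).1
            · exact (Finset.mem_filter.mp h).1
        _ = p - 1 := Finset.card_range _
    have hσab := hσ va vb hab hnadj
    rw [hdegA, hdegB] at hσab
    have hpn1 : p = n - 1 := by
      have h1 : (n : ℤ) - 2 ≤ (A.card : ℤ) + B.card := hσab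
      have h2 : (A.card : ℤ) + B.card ≤ (p : ℤ) - 1 := by
        have := hsum
        omega
      omega
    -- unique vertex outside L
    have hz : ∃ z, z ∉ L := by
      by_contra hzz
      push_neg at hzz
      have : (Finset.univ : Finset V) ⊆ L.toFinset := fun z _ => List.mem_toFinset.mpr (hzz z)
      have := Finset.card_le_card this
      rw [List.toFinset_card_of_nodup hnd] at this
      simp only [Finset.card_univ] at this
      omega
    obtain ⟨x, hxL⟩ := hz
    have hxuniq : ∀ v, v ∉ L → v = x := by
      intro v hv
      have hcompl : (Finset.univ \ L.toFinset).card = 1 := by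
        rw [Finset.card_sdiff_of_subset (fun z _ => Finset.mem_univ z),
          List.toFinset_card_of_nodup hnd, hlen]
        simp only [Finset.card_univ]
        omega
      have hvmem : v ∈ Finset.univ \ L.toFinset := by
        simp [List.mem_toFinset, hv]
      have hxmem : x ∈ Finset.univ \ L.toFinset := by
        simp [List.mem_toFinset, hxL]
      exact Finset.card_le_one.mp (le_of_eq hcompl) v hvmem x hxmem
    -- x has a neighbor in L
    obtain ⟨w⟩ := hG.preconnected va x
    obtain ⟨c, hcL, d, hdL, hcd⟩ := cross_of_walk (S := {v | v ∈ L}) w (List.getElem_mem e0) hxL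
    have hdx : d = x := hxuniq d hdL
    rw [hdx] at hcd
    obtain ⟨jj, hjj, rfl⟩ := List.mem_iff_getElem.mp hcL
    exact spider G L hLne hch hnd x hxL jj hjj hcd.symm
      (fun v => or_iff_not_imp_left.mpr (hxuniq v))
end
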